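/- Let q be a prime power, regard 𝔽_q ⊆ 𝔽_{q²}, and for ε, γ ∈ 𝔽_{q²} \ 𝔽_q let c_{ε,γ} ∈ 𝔽_q and d_{ε,γ} ∈ 𝔽_q^× be the unique elements with γ = c_{ε,γ} + d_{ε,γ}·ε. Let x, y ∈ 𝔽_{q²}^× with β := x⁻¹y ∉ 𝔽_q, and let χ: 𝔽_{q²}^× → ℂ^× be a group homomorphism. Then ∑_{α ∈ 𝔽_{q²}^× \ (𝔽_q^× ∪ β⁻¹𝔽_q^×)} χ(d_{βα, α}) = (q−1)·∑_{t ∈ 𝔽_q^×} χ(t). -/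

import Mathlib

open scoped Classical

/-- the map `α ↦ d_{βα,α}` sweeps `𝔽_q^×` exactly `q-1` times, so the
corresponding character sum equals `(q-1)·∑_{t ∈ 𝔽_q^×} χ(t)`.  Here, for
`ε, γ ∈ 𝔽_{q²} \ 𝔽_q`, `c ε γ ∈ 𝔽_q` and `d ε γ ∈ 𝔽_q^×` are the unique elements with
`γ = c ε γ + (d ε γ)·ε`. -/
theorem stmt_17 (q p n : ℕ) (hp : p.Prime) (hq : q = p ^ n) (hn : n ≠ 0)
    (F K : Type) [Field F] [Field K] [Fintype F] [Fintype K] [Algebra F K]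
    (hF : Fintype.card F = q) (hK : Fintype.card K = q ^ 2)
    (c : K → K → K) (d : K → K → Kˣ)
    (hcd : ∀ ε γ : K, ε ∉ Set.range (algebraMap F K) → γ ∉ Set.range (algebraMap F K) →
      (c ε γ ∈ Set.range (algebraMap F K) ∧
       ((d ε γ : Kˣ) : K) ∈ Set.range (algebraMap F K) ∧
       γ = c ε γ + ((d ε γ : Kˣ) : K) * ε))
    (x y : Kˣ) (hβ : ((x⁻¹ * y : Kˣ) : K) ∉ Set.range (algebraMap F K))
    (χ : Kˣ →* ℂˣ) :
    ∑ α ∈ Finset.univ.filter (fun α : Kˣ =>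
        ((α : Kˣ) : K) ∉ Set.range (algebraMap F K) ∧
        ((x⁻¹ * y * α : Kˣ) : K) ∉ Set.range (algebraMap F K)),
      ((χ (d ((x⁻¹ * y * α : Kˣ) : K) ((α : Kˣ) : K)) : ℂˣ) : ℂ)
    = ((q : ℂ) - 1) *
        ∑ t : Fˣ, ((χ (Units.map (algebraMap F K).toMonoidHom t) : ℂˣ) : ℂ) := by
  have hφinj : Function.Injective (algebraMap F K) := (algebraMap F K).injective
  set φ := algebraMap F K with hφ
  set R := Set.range φ with hRdef
  set b : K := ((x⁻¹ * y : Kˣ) : K) with hb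
  have hφne : ∀ t : Fˣ, φ (t : F) ≠ 0 := by
    intro t h
    exact t.ne_zero (hφinj (by simpa using h))
  -- 1 - φ t * b ≠ 0
  have hne : ∀ t : Fˣ, (1 : K) - φ (t : F) * b ≠ 0 := by
    intro t h
    apply hβ
    refine ⟨(t : F)⁻¹, ?_⟩
    rw [map_inv₀]
    have h1 : φ (t : F) * b = 1 := by linear_combination -h
    exact inv_eq_of_mul_eq_one_right h1
  -- uniqueness of representation
  have huniq : ∀ ε c₁ c₂ d₁ d₂ : K, ε ∉ R → c₁ ∈ R → c₂ ∈ R → d₁ ∈ R → d₂ ∈ R →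
      c₁ + d₁ * ε = c₂ + d₂ * ε → d₁ = d₂ ∧ c₁ = c₂ := by
    rintro ε _ _ _ _ hε ⟨a₁, rfl⟩ ⟨a₂, rfl⟩ ⟨b₁, rfl⟩ ⟨b₂, rfl⟩ heq
    by_cases hbb : b₁ = b₂
    · subst hbb
      exact ⟨rfl, by linear_combination heq⟩
    · exfalso
      apply hε
      refine ⟨(a₁ - a₂) / (b₂ - b₁), ?_⟩
      have hδ : φ b₂ - φ b₁ ≠ 0 := sub_ne_zero.mpr fun hh => hbb (hφinj hh).symm
      rw [map_div₀, map_sub, map_sub]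
      field_simp
      linear_combination heq
  -- the explicit parametrization
  have hevne : ∀ t s : Fˣ, ((1 : K) - φ (t : F) * b)⁻¹ * φ (s : F) ≠ 0 :=
    fun t s => mul_ne_zero (inv_ne_zero (hne t)) (hφne s)
  set ev : Fˣ → Fˣ → K := fun t s => ((1 : K) - φ (t : F) * b)⁻¹ * φ (s : F) with hev
  -- key identity: ev = φ s + φ t * (b * ev)
  have hkey3 : ∀ t s : Fˣ, ev t s = φ (s : F) + φ (t : F) * (b * ev t s) := by
    intro t s
    show ((1 : K) - φ (t : F) * b)⁻¹ * φ (s : F)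
      = φ (s : F) + φ (t : F) * (b * (((1 : K) - φ (t : F) * b)⁻¹ * φ (s : F)))
    field_simp [hne t]
    ring
  have hkey1 : ∀ t s : Fˣ, ev t s ∉ R := by
    intro t s ⟨u, hu⟩
    apply hβ
    have hu2 : φ u = ((1 : K) - φ (t : F) * b)⁻¹ * φ (s : F) := hu
    have hu0 : u ≠ 0 := by
      intro h0; subst h0
      rw [map_zero] at hu2
      exact hevne t s hu2.symm
    refine ⟨(t : F)⁻¹ * (1 - (s : F) * u⁻¹), ?_⟩
    rw [map_mul, map_inv₀, map_sub, map_one, map_mul, map_inv₀]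
    have hu' : φ u * ((1 : K) - φ (t : F) * b) = φ (s : F) := by
      rw [hu2, inv_mul_eq_div, div_mul_cancel₀ _ (hne t)]
    have hφu : φ u ≠ 0 := fun h => hu0 (hφinj (by rw [h, map_zero]))
    have h5 : φ (s : F) * (φ u)⁻¹ = 1 - φ (t : F) * b := by
      rw [← hu', mul_comm (φ u), mul_assoc, mul_inv_cancel₀ hφu, mul_one]
    rw [h5]
    field_simp [hφne t]
    ring
  have hkey2 : ∀ t s : Fˣ, b * ev t s ∉ R := by
    intro t s ⟨u, hu⟩
    have hu2 : φ u = b * (((1 : K) - φ (t : F) * b)⁻¹ * φ (s : F)) := hu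
    have hu' : φ u * ((1 : K) - φ (t : F) * b) = b * φ (s : F) := by
      rw [hu2, inv_mul_eq_div, ← mul_div_assoc, div_mul_cancel₀ _ (hne t)]
    by_cases hc : (s : F) + u * (t : F) = 0
    · have hφu : φ u = 0 := by
        have h2 : φ ((s : F) + u * (t : F)) = 0 := by rw [hc, map_zero]
        rw [map_add, map_mul] at h2
        -- b * (φ s + φ u * φ t) = φ u
        have h3 : b * (φ (s:F) + φ u * φ (t:F)) = φ u := by linear_combination -hu'
        rw [h2, mul_zero] at h3
        exact h3.symm
      have hu0 : u = 0 := hφinj (by simpa using hφu)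
      rw [hu0, zero_mul, add_zero] at hc
      exact s.ne_zero hc
    · apply hβ
      refine ⟨u / ((s : F) + u * (t : F)), ?_⟩
      rw [map_div₀, map_add, map_mul]
      have hφc : φ (s:F) + φ u * φ (t:F) ≠ 0 := by
        intro h
        apply hc
        apply hφinj
        rw [map_add, map_mul, map_zero, h]
      field_simp
      linear_combination hu'
  -- the value of d on points in the image
  have hdval : ∀ t s : Fˣ, d (b * ev t s) (ev t s) = Units.map φ.toMonoidHom t := by
    intro t s
    obtain ⟨hcR, hdR, heq⟩ := hcd (b * ev t s) (ev t s) (hkey2 t s) (hkey1 t s)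
    have := huniq (b * ev t s) (φ (s : F)) (c (b * ev t s) (ev t s)) (φ (t : F))
      ((d (b * ev t s) (ev t s) : Kˣ) : K) (hkey2 t s) ⟨(s:F), rfl⟩ hcR ⟨(t:F), rfl⟩ hdR
      (by rw [← hkey3 t s]; exact heq)
    ext
    exact this.1.symm
  -- now the bijection
  have hmain : ∑ a : Fˣ × Fˣ, ((χ (Units.map φ.toMonoidHom a.1) : ℂˣ) : ℂ)
      = ∑ α ∈ Finset.univ.filter (fun α : Kˣ =>
        ((α : Kˣ) : K) ∉ R ∧ ((x⁻¹ * y * α : Kˣ) : K) ∉ R),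
      ((χ (d ((x⁻¹ * y * α : Kˣ) : K) ((α : Kˣ) : K)) : ℂˣ) : ℂ) := by
    refine Finset.sum_bij
      (fun (a : Fˣ × Fˣ) (_ : a ∈ Finset.univ) => Units.mk0 (ev a.1 a.2) (hevne a.1 a.2))
      ?_ ?_ ?_ ?_
    · intro a _
      simp only [Finset.mem_filter, Finset.mem_univ, true_and]
      constructor
      · exact hkey1 a.1 a.2
      · have : ((x⁻¹ * y * Units.mk0 (ev a.1 a.2) (hevne a.1 a.2) : Kˣ) : K)
            = b * ev a.1 a.2 := by
          rw [Units.val_mul, Units.val_mk0, ← hb]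
        rw [this]
        exact hkey2 a.1 a.2
    · intro a₁ _ a₂ _ h
      have hval : ev a₁.1 a₁.2 = ev a₂.1 a₂.2 := by
        have := congrArg Units.val h
        simpa using this
      have key := huniq (b * ev a₁.1 a₁.2) (φ (a₁.2 : F)) (φ (a₂.2 : F))
        (φ (a₁.1 : F)) (φ (a₂.1 : F)) (hkey2 a₁.1 a₁.2)
        ⟨(a₁.2 : F), rfl⟩ ⟨(a₂.2 : F), rfl⟩ ⟨(a₁.1 : F), rfl⟩ ⟨(a₂.1 : F), rfl⟩
        (by rw [← hkey3 a₁.1 a₁.2, hval, ← hkey3 a₂.1 a₂.2])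
      have h1 : a₁.1 = a₂.1 := Units.ext (hφinj key.1)
      have h2 : a₁.2 = a₂.2 := Units.ext (hφinj key.2)
      exact Prod.ext h1 h2
    · intro α hα
      simp only [Finset.mem_filter, Finset.mem_univ, true_and] at hα
      obtain ⟨h1, h2⟩ := hα
      have h2' : b * (α : K) ∉ R := by
        rw [hb]; rw [← Units.val_mul]; exact h2
      obtain ⟨hcR, hdR, heq⟩ := hcd (b * (α : K)) (α : K) h2' h1
      obtain ⟨w, hw⟩ := hdR
      obtain ⟨a, ha⟩ := hcR
      have hw0 : w ≠ 0 := by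
        intro h0; subst h0
        exact (d (b * (α : K)) (α : K)).ne_zero (by simpa using hw.symm)
      have hne' : (1 : K) - φ w * b ≠ 0 := hne (Units.mk0 w hw0)
      have hαval : (α : K) * ((1 : K) - φ w * b) = φ a := by
        rw [ha, hw]
        linear_combination heq
      have ha0 : a ≠ 0 := by
        intro h0; subst h0
        rw [map_zero] at hαval
        exact mul_ne_zero α.ne_zero hne' hαval
      refine ⟨(Units.mk0 w hw0, Units.mk0 a ha0), Finset.mem_univ _, ?_⟩
      ext
      show ((1 : K) - φ w * b)⁻¹ * φ a = (α : K)
      rw [inv_mul_eq_div, div_eq_iff hne']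
      exact hαval.symm
    · intro a _
      have hcoe : ((x⁻¹ * y * Units.mk0 (ev a.1 a.2) (hevne a.1 a.2) : Kˣ) : K)
          = b * ev a.1 a.2 := by rw [Units.val_mul, Units.val_mk0, ← hb]
      rw [show ((Units.mk0 (ev a.1 a.2) (hevne a.1 a.2) : Kˣ) : K) = ev a.1 a.2 from rfl,
        hcoe, hdval a.1 a.2]
  rw [← hmain, Fintype.sum_prod_type]
  simp only [Finset.sum_const, Finset.card_univ, nsmul_eq_mul]
  have hcard : ((Fintype.card Fˣ : ℕ) : ℂ) = (q : ℂ) - 1 := by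
    rw [Fintype.card_units, hF]
    have hq1 : 1 ≤ q := by
      rw [hq]; exact Nat.one_le_iff_ne_zero.mpr (pow_ne_zero n hp.pos.ne')
    rw [Nat.cast_sub hq1, Nat.cast_one]
  rw [Finset.mul_sum]
  exact Finset.sum_congr rfl fun t _ => by rw [hcard]
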